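/- Under the splitting anchored extra-gradient method with β_k = 1/(k+2), η-update η_{k+1} = η_kβ_{k+1}(1−Mη_k²−β_k²)/((1−β_k)β_k(1−Mη_k²)), 0 < η_0 ≤ 1/√(3M), M = (1+γL)²/γ², applied to 0 ∈ A(x) + B(x) with A, B maximally monotone and B single-valued L-Lipschitz, the iterates satisfy ‖G_γ(x_k)‖² ≤ 4C⋆‖x_0 − x⋆‖²/(η⋆(k+1)(k+2)) and ∑_{i=0}^{k−1}(i+1)(i+2)‖G_γ(x_{i+1}) − G_γ(x_i)‖² ≤ C⋆‖x_0 − x⋆‖²/γ, where η⋆ = lim η_k > 0 and C⋆ = M(η_0η⋆ + γ²)/η⋆. -/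

import Mathlib

set_option maxHeartbeats 1600000000

open Filter Topology
open scoped InnerProductSpace

open scoped InnerProductSpace

variable {V : Type*} [NormedAddCommGroup V] [InnerProductSpace ℝ V]

lemma aeg_step (γ η ηp M K : ℝ) (hγ : 0 < γ) (hη : 0 < η) (hK : 2 ≤ K)
    (hM : 0 < M) (hm : M * η ^ 2 ≤ 1 / 3) (hMγ : 1 ≤ M * γ ^ 2)
    (hrec : ηp = η * (1 / (K + 1)) * (1 - M * η ^ 2 - (1 / K) ^ 2) /
      ((1 - 1 / K) * (1 / K) * (1 - M * η ^ 2)))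
    (g d e q : V)
    (h1 : γ * ‖e‖ ^ 2 ≤ ⟪e, -(η • d)⟫_ℝ)
    (h3 : γ * ‖d + e‖ ^ 2 ≤ ⟪d + e, -((1 / K) • q) - η • (g + d)⟫_ℝ)
    (h5 : γ ^ 2 * ‖e‖ ^ 2 ≤ η ^ 2 * ‖d‖ ^ 2) :
    ηp * (K * (K + 1) / 2) * ‖g + d + e‖ ^ 2 +
      K * ⟪g + d + e, (1 - 1 / K) • q - η • (g + d)⟫_ℝ +
      γ * ((K - 1) * K) * ‖d + e‖ ^ 2 ≤
    η * ((K - 1) * K / 2) * ‖g‖ ^ 2 + (K - 1) * ⟪g, q⟫_ℝ := by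
  have hK0 : (0:ℝ) < K := by linarith
  have hK1 : (0:ℝ) < K - 1 := by linarith
  have hK2 : (0:ℝ) < K + 1 := by linarith
  have hm1 : M * η ^ 2 < 1 := by linarith
  have hm0 : (0:ℝ) < M * η ^ 2 := by positivity
  have hme : (0:ℝ) < 1 - M * η ^ 2 := by linarith
  -- slacks
  have t1 : 0 ≤ ⟪e, -(η • d)⟫_ℝ - γ * ‖e‖ ^ 2 := by linarith
  have t3 : 0 ≤ ⟪d + e, -((1 / K) • q) - η • (g + d)⟫_ℝ - γ * ‖d + e‖ ^ 2 := by linarith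
  have t5 : 0 ≤ η ^ 2 * ‖d‖ ^ 2 - γ ^ 2 * ‖e‖ ^ 2 := by linarith
  have s1 : (0:ℝ) ≤ ‖(M * η ^ 2) • (g + d) + (M * η ^ 2 - (1 - M * η ^ 2) * (K - 1)) • e‖ ^ 2 := by
    positivity
  have s2 : (0:ℝ) ≤ ‖η • d + γ • e‖ ^ 2 := by positivity
  have s3 : (0:ℝ) ≤ ‖e‖ ^ 2 := by positivity
  have key :
      (η * ((K - 1) * K / 2) * ‖g‖ ^ 2 + (K - 1) * ⟪g, q⟫_ℝ) -
        (ηp * (K * (K + 1) / 2) * ‖g + d + e‖ ^ 2 +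
          K * ⟪g + d + e, (1 - 1 / K) • q - η • (g + d)⟫_ℝ +
          γ * ((K - 1) * K) * ‖d + e‖ ^ 2) =
      ((K - 1) * K) * (⟪d + e, -((1 / K) • q) - η • (g + d)⟫_ℝ - γ * ‖d + e‖ ^ 2) +
      (γ * M * η * ((K - 1) * K)) * (⟪e, -(η • d)⟫_ℝ - γ * ‖e‖ ^ 2) +
      ((K - 1) * K * (1 - M * η ^ 2) / (2 * η)) * (η ^ 2 * ‖d‖ ^ 2 - γ ^ 2 * ‖e‖ ^ 2) +
      (K / (2 * M * η * (K - 1) * (1 - M * η ^ 2))) *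
        ‖(M * η ^ 2) • (g + d) + (M * η ^ 2 - (1 - M * η ^ 2) * (K - 1)) • e‖ ^ 2 +
      (M * K * η * (K - 1) / 2) * ‖η • d + γ • e‖ ^ 2 +
      ((K - 1) * K * (M * γ ^ 2 - 1) / (2 * M * η)) * ‖e‖ ^ 2 := by
    have cdg : ⟪d, g⟫_ℝ = ⟪g, d⟫_ℝ := real_inner_comm _ _
    have ceg : ⟪e, g⟫_ℝ = ⟪g, e⟫_ℝ := real_inner_comm _ _
    have ced : ⟪e, d⟫_ℝ = ⟪d, e⟫_ℝ := real_inner_comm _ _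
    have cqg : ⟪q, g⟫_ℝ = ⟪g, q⟫_ℝ := real_inner_comm _ _
    have cqd : ⟪q, d⟫_ℝ = ⟪d, q⟫_ℝ := real_inner_comm _ _
    have cqe : ⟪q, e⟫_ℝ = ⟪e, q⟫_ℝ := real_inner_comm _ _
    rw [hrec]
    simp only [← real_inner_self_eq_norm_sq, inner_add_left, inner_add_right,
      inner_sub_left, inner_sub_right, inner_neg_left, inner_neg_right,
      real_inner_smul_left, real_inner_smul_right, cdg, ceg, ced, cqg, cqd, cqe]
    obtain ⟨c, hc⟩ : ∃ c, c = 1 - M * η ^ 2 := ⟨_, rfl⟩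
    have hM' : M = (1 - c) / η ^ 2 := by rw [hc]; field_simp; ring
    have hc0 : c ≠ 0 := by rw [hc]; exact hme.ne'
    have hc1 : 1 - c ≠ 0 := by rw [hc]; ring_nf; exact hm0.ne'
    rw [hM']
    field_simp [hK0.ne', hK1.ne', hK2.ne', hη.ne', hc0, hc1]
    ring
  have p3 : 0 ≤ ((K - 1) * K) *
      (⟪d + e, -((1 / K) • q) - η • (g + d)⟫_ℝ - γ * ‖d + e‖ ^ 2) :=
    mul_nonneg (by positivity) t3
  have p1 : 0 ≤ (γ * M * η * ((K - 1) * K)) * (⟪e, -(η • d)⟫_ℝ - γ * ‖e‖ ^ 2) :=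
    mul_nonneg (by positivity) t1
  have p5 : 0 ≤ ((K - 1) * K * (1 - M * η ^ 2) / (2 * η)) *
      (η ^ 2 * ‖d‖ ^ 2 - γ ^ 2 * ‖e‖ ^ 2) :=
    mul_nonneg (div_nonneg (mul_nonneg (mul_nonneg hK1.le hK0.le) hme.le) (by positivity)) t5
  have p7 : 0 ≤ (K / (2 * M * η * (K - 1) * (1 - M * η ^ 2))) *
      ‖(M * η ^ 2) • (g + d) + (M * η ^ 2 - (1 - M * η ^ 2) * (K - 1)) • e‖ ^ 2 :=
    mul_nonneg (div_nonneg hK0.le (by positivity)) s1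
  have p8 : 0 ≤ (M * K * η * (K - 1) / 2) * ‖η • d + γ • e‖ ^ 2 :=
    mul_nonneg (by positivity) s2
  have p9 : 0 ≤ ((K - 1) * K * (M * γ ^ 2 - 1) / (2 * M * η)) * ‖e‖ ^ 2 :=
    mul_nonneg (div_nonneg (mul_nonneg (mul_nonneg hK1.le hK0.le) (by linarith)) (by positivity)) s3
  linarith [key, p3, p1, p5, p7, p8, p9]

lemma eta_props (M : ℝ) (hM : 0 < M) (η : ℕ → ℝ) (hη0 : 0 < η 0) (hb : M * η 0 ^ 2 ≤ 1 / 3)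
    (hrec : ∀ k : ℕ,
      η (k + 1) =
        η k * (1 / ((k : ℝ) + 3)) * (1 - M * η k ^ 2 - (1 / ((k : ℝ) + 2)) ^ 2) /
          ((1 - 1 / ((k : ℝ) + 2)) * (1 / ((k : ℝ) + 2)) * (1 - M * η k ^ 2))) :
    ∀ k : ℕ, (0 < η k ∧ η k ≤ η 0 ∧
        η 0 * (5 / 8 + (1 / 4) * (1 / ((k : ℝ) + 1) + 1 / ((k : ℝ) + 2))) ≤ η k) ∧
      η (k + 1) ≤ η k := by
  have step : ∀ k : ℕ, 0 < η k → η k ≤ η 0 →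
      η 0 * (5 / 8 + (1 / 4) * (1 / ((k : ℝ) + 1) + 1 / ((k : ℝ) + 2))) ≤ η k →
      0 < η (k + 1) ∧ η (k + 1) ≤ η k ∧
        η 0 * (5 / 8 + (1 / 4) * (1 / ((k : ℝ) + 2) + 1 / ((k : ℝ) + 3))) ≤ η (k + 1) := by
    intro k hpos hub hlb
    have hkc : (0:ℝ) ≤ (k : ℝ) := Nat.cast_nonneg k
    have hr := hrec k
    set K : ℝ := (k : ℝ) + 2 with hKdef
    have hK : 2 ≤ K := by rw [hKdef]; linarith
    have hKne : K ≠ 0 := by linarith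
    have hK1ne : K - 1 ≠ 0 := by intro h; nlinarith
    have hK2 : (k : ℝ) + 3 = K + 1 := by rw [hKdef]; ring
    have hK2ne : K + 1 ≠ 0 := by linarith
    have hm' : M * η k ^ 2 ≤ 1 / 3 := by
      have : η k ^ 2 ≤ η 0 ^ 2 := pow_le_pow_left₀ hpos.le hub 2
      nlinarith
    have hm0 : (0:ℝ) ≤ M * η k ^ 2 := by positivity
    have hme : (0:ℝ) < 1 - M * η k ^ 2 := by linarith
    have hD : (0:ℝ) < (K ^ 2 - 1) * (1 - M * η k ^ 2) := by nlinarith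
    have hN : (0:ℝ) < K ^ 2 * (1 - M * η k ^ 2) - 1 := by nlinarith
    rw [hK2] at hr
    have hform : η (k + 1) =
        η k * ((K ^ 2 * (1 - M * η k ^ 2) - 1) / ((K ^ 2 - 1) * (1 - M * η k ^ 2))) := by
      rw [hr]; field_simp [hKne, hK1ne, hK2ne, hme.ne', (ne_of_gt (by nlinarith : (0:ℝ) < K ^ 2 - 1))]; ring
    have hRpos : 0 < (K ^ 2 * (1 - M * η k ^ 2) - 1) / ((K ^ 2 - 1) * (1 - M * η k ^ 2)) :=
      div_pos hN hD
    have hR1 : (K ^ 2 * (1 - M * η k ^ 2) - 1) / ((K ^ 2 - 1) * (1 - M * η k ^ 2)) ≤ 1 := by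
      rw [div_le_one hD]; nlinarith
    have hc1 : (0:ℝ) < K ^ 2 - 1 := by nlinarith
    have hratio : 1 - (1 / 2) / (K ^ 2 - 1) ≤
        (K ^ 2 * (1 - M * η k ^ 2) - 1) / ((K ^ 2 - 1) * (1 - M * η k ^ 2)) := by
      rw [le_div_iff₀ hD]
      have e1 : (1 - (1 / 2) / (K ^ 2 - 1)) * ((K ^ 2 - 1) * (1 - M * η k ^ 2)) =
          (K ^ 2 - 1) * (1 - M * η k ^ 2) - (1 - M * η k ^ 2) / 2 := by
        field_simp
      rw [e1]; nlinarith
    refine ⟨by rw [hform]; exact mul_pos hpos hRpos, ?_, ?_⟩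
    · rw [hform]
      calc η k * ((K ^ 2 * (1 - M * η k ^ 2) - 1) / ((K ^ 2 - 1) * (1 - M * η k ^ 2)))
          ≤ η k * 1 := by
            exact mul_le_mul_of_nonneg_left hR1 hpos.le
        _ = η k := by ring
    · -- lower bound
      have hk1 : (0:ℝ) < (k : ℝ) + 1 := by linarith
      have htk1 : 1 / ((k : ℝ) + 1) ≤ 1 := by
        rw [div_le_one hk1]; linarith
      have htk2 : 1 / K ≤ 1 / 2 := by
        rw [div_le_div_iff₀ (by linarith) (by norm_num)]; linarith
      have htle : (5 / 8 + (1 / 4) * (1 / ((k : ℝ) + 1) + 1 / K)) ≤ 1 := by linarith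
      have htpos : (0:ℝ) < 5 / 8 + (1 / 4) * (1 / ((k : ℝ) + 1) + 1 / K) := by positivity
      have hcpos : (0:ℝ) ≤ (1 / 2) / (K ^ 2 - 1) := by positivity
      have hdiff : (5 / 8 + (1 / 4) * (1 / ((k : ℝ) + 1) + 1 / K)) - (1 / 2) / (K ^ 2 - 1) =
          5 / 8 + (1 / 4) * (1 / K + 1 / (K + 1)) := by
        have : K ^ 2 - 1 = ((k : ℝ) + 1) * (K + 1) := by rw [hKdef]; ring
        rw [this]; field_simp; ring
      rw [hform, hK2]
      have s1 : η 0 * (5 / 8 + (1 / 4) * (1 / ((k : ℝ) + 1) + 1 / K)) *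
            ((K ^ 2 * (1 - M * η k ^ 2) - 1) / ((K ^ 2 - 1) * (1 - M * η k ^ 2))) ≤
          η k * ((K ^ 2 * (1 - M * η k ^ 2) - 1) / ((K ^ 2 - 1) * (1 - M * η k ^ 2))) :=
        mul_le_mul_of_nonneg_right hlb hRpos.le
      have s2 : η 0 * (5 / 8 + (1 / 4) * (1 / ((k : ℝ) + 1) + 1 / K)) *
            (1 - (1 / 2) / (K ^ 2 - 1)) ≤
          η 0 * (5 / 8 + (1 / 4) * (1 / ((k : ℝ) + 1) + 1 / K)) *
            ((K ^ 2 * (1 - M * η k ^ 2) - 1) / ((K ^ 2 - 1) * (1 - M * η k ^ 2))) :=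
        mul_le_mul_of_nonneg_left hratio (by positivity)
      have s3 : η 0 * (5 / 8 + (1 / 4) * (1 / K + 1 / (K + 1))) ≤
          η 0 * (5 / 8 + (1 / 4) * (1 / ((k : ℝ) + 1) + 1 / K)) *
            (1 - (1 / 2) / (K ^ 2 - 1)) := by
        have expand : η 0 * (5 / 8 + (1 / 4) * (1 / ((k : ℝ) + 1) + 1 / K)) *
              (1 - (1 / 2) / (K ^ 2 - 1)) =
            η 0 * ((5 / 8 + (1 / 4) * (1 / ((k : ℝ) + 1) + 1 / K)) -
              (5 / 8 + (1 / 4) * (1 / ((k : ℝ) + 1) + 1 / K)) * ((1 / 2) / (K ^ 2 - 1))) := by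
          ring
        rw [expand, ← hdiff]
        have : (5 / 8 + (1 / 4) * (1 / ((k : ℝ) + 1) + 1 / K)) * ((1 / 2) / (K ^ 2 - 1)) ≤
            (1 / 2) / (K ^ 2 - 1) := by
          nlinarith
        nlinarith
      linarith
  intro k
  induction k with
  | zero =>
      have := step 0 hη0 le_rfl (by norm_num)
      exact ⟨⟨hη0, le_rfl, by norm_num⟩, this.2.1⟩
  | succ n ih =>
      obtain ⟨⟨hp, hu, hl⟩, _⟩ := ih
      have hs := step n hp hu hl
      have hu' : η (n + 1) ≤ η 0 := le_trans hs.2.1 hu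
      have hl' : η 0 * (5 / 8 + 1 / 4 *
          (1 / (((n + 1 : ℕ) : ℝ) + 1) + 1 / (((n + 1 : ℕ) : ℝ) + 2))) ≤ η (n + 1) := by
        have h22 := hs.2.2
        push_cast at h22 ⊢
        ring_nf at h22 ⊢
        linarith
      exact ⟨⟨hs.1, hu', hl'⟩, (step (n + 1) hs.1 hu' hl').2.1⟩

theorem splitting_aeg_convergence {p : ℕ}
    (A : EuclideanSpace ℝ (Fin p) → Set (EuclideanSpace ℝ (Fin p)))
    (B : EuclideanSpace ℝ (Fin p) → EuclideanSpace ℝ (Fin p))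
    (γ L : ℝ) (hγ : 0 < γ) (hL : 0 < L)
    (hAmono : ∀ x y u v, u ∈ A x → v ∈ A y → 0 ≤ ⟪u - v, x - y⟫_ℝ)
    (hBmono : ∀ x y, 0 ≤ ⟪B x - B y, x - y⟫_ℝ)
    (hBLip : ∀ x y, ‖B x - B y‖ ≤ L * ‖x - y‖)
    (JA JB : EuclideanSpace ℝ (Fin p) → EuclideanSpace ℝ (Fin p))
    (hJA : ∀ w z, JA w = z ↔ (1 / γ) • (w - z) ∈ A z)
    (hJAfirm : ∀ u v, ‖JA u - JA v‖ ^ 2 ≤ ⟪JA u - JA v, u - v⟫_ℝ)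
    (hJBres : ∀ u, JB u + γ • B (JB u) = u)
    (hJBnonexp : ∀ u v, ‖JB u - JB v‖ ≤ ‖u - v‖)
    (Gγ : EuclideanSpace ℝ (Fin p) → EuclideanSpace ℝ (Fin p))
    (hG : ∀ x, Gγ x = (1 / γ) • (x - JA (x - γ • B x)))
    (xstar : EuclideanSpace ℝ (Fin p)) (hstar : -(B xstar) ∈ A xstar)
    (M : ℝ) (hM : M = (1 + γ * L) ^ 2 / γ ^ 2)
    (η : ℕ → ℝ) (hη0 : 0 < η 0) (hη0' : η 0 ≤ 1 / Real.sqrt (3 * M))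
    (hrec : ∀ k : ℕ,
      η (k + 1) =
        η k * (1 / ((k : ℝ) + 3)) * (1 - M * η k ^ 2 - (1 / ((k : ℝ) + 2)) ^ 2) /
          ((1 - 1 / ((k : ℝ) + 2)) * (1 / ((k : ℝ) + 2)) * (1 - M * η k ^ 2)))
    (x y u v : ℕ → EuclideanSpace ℝ (Fin p))
    (hu0 : u 0 = x 0 + γ • B (x 0))
    (hx0 : x 0 = JB (u 0))
    (hv : ∀ k : ℕ, v k = u k + (1 / ((k : ℝ) + 2)) • (u 0 - u k) - η k • Gγ (x k))
    (hy : ∀ k : ℕ, y k = JB (v k))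
    (hu : ∀ k : ℕ, u (k + 1) = u k + (1 / ((k : ℝ) + 2)) • (u 0 - u k) - η k • Gγ (y k))
    (hx : ∀ k : ℕ, x (k + 1) = JB (u (k + 1))) :
    ∃ ηs : ℝ, 0 < ηs ∧ Tendsto η atTop (𝓝 ηs) ∧
      (∀ k : ℕ,
        ‖Gγ (x k)‖ ^ 2 ≤
          4 * (M * (η 0 * ηs + γ ^ 2) / ηs) * ‖x 0 - xstar‖ ^ 2 /
            (ηs * ((k : ℝ) + 1) * ((k : ℝ) + 2))) ∧
      (∀ k : ℕ,
        ∑ i ∈ Finset.range k,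
            ((i : ℝ) + 1) * ((i : ℝ) + 2) * ‖Gγ (x (i + 1)) - Gγ (x i)‖ ^ 2 ≤
          (M * (η 0 * ηs + γ ^ 2) / ηs) * ‖x 0 - xstar‖ ^ 2 / γ) := by
  have hγL : (0:ℝ) < 1 + γ * L := by positivity
  have hMpos : 0 < M := by rw [hM]; positivity
  have hMγ2 : M * γ ^ 2 = (1 + γ * L) ^ 2 := by rw [hM]; field_simp
  have hMγ : 1 ≤ M * γ ^ 2 := by rw [hMγ2]; nlinarith [mul_pos hγ hL]
  have hb : M * η 0 ^ 2 ≤ 1 / 3 := by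
    have h3M : (0:ℝ) < 3 * M := by linarith
    have hs : 0 < Real.sqrt (3 * M) := Real.sqrt_pos.2 h3M
    have h1 : η 0 * Real.sqrt (3 * M) ≤ 1 := by
      rw [le_div_iff₀ hs] at hη0'; linarith
    have h2 : (η 0 * Real.sqrt (3 * M)) ^ 2 ≤ 1 := by nlinarith [mul_nonneg hη0.le hs.le]
    have h3 : (η 0 * Real.sqrt (3 * M)) ^ 2 = η 0 ^ 2 * (3 * M) := by
      rw [mul_pow, Real.sq_sqrt h3M.le]
    nlinarith [h3 ▸ h2]
  have hprops := eta_props M hMpos η hη0 hb hrec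
  have hpos : ∀ k, 0 < η k := fun k => (hprops k).1.1
  have hub : ∀ k, η k ≤ η 0 := fun k => (hprops k).1.2.1
  have hlb : ∀ k, 5 / 8 * η 0 ≤ η k := by
    intro k
    have h := (hprops k).1.2.2
    have h1 : (0:ℝ) ≤ 1 / ((k : ℝ) + 1) := by positivity
    have h2 : (0:ℝ) ≤ 1 / ((k : ℝ) + 2) := by positivity
    nlinarith
  have hmk : ∀ k, M * η k ^ 2 ≤ 1 / 3 := by
    intro k
    have : η k ^ 2 ≤ η 0 ^ 2 := pow_le_pow_left₀ (hpos k).le (hub k) 2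
    nlinarith
  have hanti : Antitone η := antitone_nat_of_succ_le (fun k => (hprops k).2)
  have hbdd : BddBelow (Set.range η) := ⟨5 / 8 * η 0, by rintro _ ⟨k, rfl⟩; exact hlb k⟩
  have htend : Tendsto η atTop (𝓝 (⨅ k, η k)) := tendsto_atTop_ciInf hanti hbdd
  set ηs := ⨅ k, η k with hηsdef
  have hηs_pos : 0 < ηs := lt_of_lt_of_le (by positivity) (le_ciInf hlb)
  have hηs_le : ∀ k, ηs ≤ η k := fun k => ciInf_le hbdd k
  -- firm nonexpansiveness of JB
  have hJBfirm : ∀ w w', ‖JB w - JB w'‖ ^ 2 ≤ ⟪JB w - JB w', w - w'⟫_ℝ := by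
    intro w w'
    have e1 : γ • B (JB w) = w - JB w :=
      eq_sub_of_add_eq (by rw [add_comm]; exact hJBres w)
    have e2 : γ • B (JB w') = w' - JB w' :=
      eq_sub_of_add_eq (by rw [add_comm]; exact hJBres w')
    have hww : w - w' = (JB w - JB w') + γ • (B (JB w) - B (JB w')) := by
      rw [smul_sub, e1, e2]; abel
    rw [hww, inner_add_right, real_inner_smul_right, ← real_inner_self_eq_norm_sq]
    have hm := hBmono (JB w) (JB w')
    have hcomm : ⟪B (JB w) - B (JB w'), JB w - JB w'⟫_ℝ =
        ⟪JB w - JB w', B (JB w) - B (JB w')⟫_ℝ := real_inner_comm _ _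
    nlinarith
  -- cocoercivity of the u-space residual
  have coco : ∀ w w', γ * ‖Gγ (JB w) - Gγ (JB w')‖ ^ 2 ≤
      ⟪Gγ (JB w) - Gγ (JB w'), w - w'⟫_ℝ := by
    intro w w'
    have hDW := hJBfirm w w'
    have e1 : γ • B (JB w) = w - JB w :=
      eq_sub_of_add_eq (by rw [add_comm]; exact hJBres w)
    have e2 : γ • B (JB w') = w' - JB w' :=
      eq_sub_of_add_eq (by rw [add_comm]; exact hJBres w')
    have harg : (JB w - γ • B (JB w)) - (JB w' - γ • B (JB w')) =
        (JB w - JB w') + ((JB w - JB w') - (w - w')) := by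
      rw [e1, e2]; abel
    have hfirm := hJAfirm (JB w - γ • B (JB w)) (JB w' - γ • B (JB w'))
    rw [harg] at hfirm
    rw [hG (JB w), hG (JB w')]
    set E := JA (JB w - γ • B (JB w)) - JA (JB w' - γ • B (JB w')) with hE
    have hsm : (1/γ) • (JB w - JA (JB w - γ • B (JB w))) -
        (1/γ) • (JB w' - JA (JB w' - γ • B (JB w'))) =
        (1/γ) • ((JB w - JB w') - E) := by
      rw [hE, ← smul_sub]; congr 1; abel
    rw [hsm, norm_smul, real_inner_smul_left]
    have hg1 : ‖(1:ℝ)/γ‖ = 1/γ := by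
      rw [Real.norm_eq_abs, abs_of_pos (by positivity)]
    rw [hg1]
    have hkey : ‖(JB w - JB w') - E‖ ^ 2 ≤ ⟪(JB w - JB w') - E, w - w'⟫_ℝ := by
      have hx1 : ‖(JB w - JB w') - E‖ ^ 2 =
          ‖JB w - JB w'‖ ^ 2 - 2 * ⟪JB w - JB w', E⟫_ℝ + ‖E‖ ^ 2 :=
        norm_sub_sq_real _ _
      have hfe : ⟪E, (JB w - JB w') + ((JB w - JB w') - (w - w'))⟫_ℝ =
          2 * ⟪E, JB w - JB w'⟫_ℝ - ⟪E, w - w'⟫_ℝ := by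
        simp only [inner_add_right, inner_sub_right]; ring
      have hsub : ⟪(JB w - JB w') - E, w - w'⟫_ℝ =
          ⟪JB w - JB w', w - w'⟫_ℝ - ⟪E, w - w'⟫_ℝ := by rw [inner_sub_left]
      have hc : ⟪E, JB w - JB w'⟫_ℝ = ⟪JB w - JB w', E⟫_ℝ := real_inner_comm _ _
      rw [hfe, hc] at hfirm
      rw [hx1, hsub]
      linarith
    have hnn : (0:ℝ) ≤ ‖(JB w - JB w') - E‖ := norm_nonneg _
    calc γ * (1/γ * ‖(JB w - JB w') - E‖) ^ 2
        = (1/γ) * ‖(JB w - JB w') - E‖ ^ 2 := by field_simp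
      _ ≤ (1/γ) * ⟪(JB w - JB w') - E, w - w'⟫_ℝ :=
          mul_le_mul_of_nonneg_left hkey (by positivity)
  -- squared Lipschitz bound
  have lip2 : ∀ w w', γ ^ 2 * ‖Gγ (JB w) - Gγ (JB w')‖ ^ 2 ≤ ‖w - w'‖ ^ 2 := by
    intro w w'
    have h1 := coco w w'
    have h2 := real_inner_le_norm (Gγ (JB w) - Gγ (JB w')) (w - w')
    rcases eq_or_lt_of_le (norm_nonneg (Gγ (JB w) - Gγ (JB w'))) with h | h
    · rw [← h]; nlinarith [sq_nonneg ‖w - w'‖]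
    · have h3 : γ * ‖Gγ (JB w) - Gγ (JB w')‖ ≤ ‖w - w'‖ := by nlinarith
      nlinarith [norm_nonneg (w - w')]
  -- the fixed point
  set ustar := xstar + γ • B xstar with hustar
  have hJBstar : JB ustar = xstar := by
    have h2 : JB ustar + γ • B (JB ustar) = xstar + γ • B xstar :=
      (hJBres ustar).trans hustar
    have hdiff : JB ustar - xstar = γ • (B xstar - B (JB ustar)) := by
      rw [smul_sub]
      refine sub_eq_sub_iff_add_eq_add.2 ?_
      rw [h2]; abel
    have hip : ‖JB ustar - xstar‖ ^ 2 ≤ 0 := by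
      have e1 : ‖JB ustar - xstar‖ ^ 2 = ⟪JB ustar - xstar, JB ustar - xstar⟫_ℝ :=
        (real_inner_self_eq_norm_sq _).symm
      have e2 : ⟪JB ustar - xstar, JB ustar - xstar⟫_ℝ =
          γ * ⟪JB ustar - xstar, B xstar - B (JB ustar)⟫_ℝ := by
        nth_rewrite 2 [hdiff]; rw [real_inner_smul_right]
      have e3 : ⟪JB ustar - xstar, B xstar - B (JB ustar)⟫_ℝ =
          -⟪B (JB ustar) - B xstar, JB ustar - xstar⟫_ℝ := by
        rw [show B xstar - B (JB ustar) = -(B (JB ustar) - B xstar) by abel,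
          inner_neg_right, real_inner_comm]
      have hm := hBmono (JB ustar) xstar
      rw [e1, e2, e3]
      nlinarith
    have hz : ‖JB ustar - xstar‖ = 0 := by nlinarith [norm_nonneg (JB ustar - xstar)]
    exact sub_eq_zero.1 (norm_eq_zero.1 hz)
  have hAz : JA (xstar - γ • B xstar) = xstar := by
    rw [hJA]
    have e : (1/γ) • ((xstar - γ • B xstar) - xstar) = -(B xstar) := by
      rw [show (xstar - γ • B xstar) - xstar = -(γ • B xstar) by abel, smul_neg, smul_smul]
      rw [show (1/γ) * γ = 1 by field_simp]
      simp
    rw [e]; exact hstar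
  have hGxstar : Gγ xstar = 0 := by rw [hG, hAz, sub_self, smul_zero]
  have hFstar : Gγ (JB ustar) = 0 := by rw [hJBstar, hGxstar]
  have cocos : ∀ w, γ * ‖Gγ (JB w)‖ ^ 2 ≤ ⟪Gγ (JB w), w - ustar⟫_ℝ := by
    intro w; have h := coco w ustar; rw [hFstar, sub_zero] at h; exact h
  have lips : ∀ w, γ ^ 2 * ‖Gγ (JB w)‖ ^ 2 ≤ ‖w - ustar‖ ^ 2 := by
    intro w; have h := lip2 w ustar; rw [hFstar, sub_zero] at h; exact h
  have hxk : ∀ k, x k = JB (u k) := by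
    intro k; cases k with
    | zero => exact hx0
    | succ n => exact hx n
  -- one-step descent
  have descent : ∀ k : ℕ,
      η (k+1) * (((k:ℝ)+2) * ((k:ℝ)+3) / 2) * ‖Gγ (x (k+1))‖ ^ 2
        + ((k:ℝ)+2) * ⟪Gγ (x (k+1)), u (k+1) - u 0⟫_ℝ
        + γ * (((k:ℝ)+1) * ((k:ℝ)+2)) * ‖Gγ (x (k+1)) - Gγ (x k)‖ ^ 2
      ≤ η k * (((k:ℝ)+1) * ((k:ℝ)+2) / 2) * ‖Gγ (x k)‖ ^ 2
        + ((k:ℝ)+1) * ⟪Gγ (x k), u k - u 0⟫_ℝ := by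
    intro k
    have hkc : (0:ℝ) ≤ (k:ℝ) := Nat.cast_nonneg k
    have huv : u (k+1) - v k = -(η k • (Gγ (y k) - Gγ (x k))) := by
      rw [hu k, hv k]; module
    have h1 : γ * ‖Gγ (x (k+1)) - Gγ (y k)‖ ^ 2 ≤
        ⟪Gγ (x (k+1)) - Gγ (y k), -(η k • (Gγ (y k) - Gγ (x k)))⟫_ℝ := by
      have hc := coco (u (k+1)) (v k)
      rw [← hx k, ← hy k, huv] at hc
      exact hc
    have huu : u (k+1) - u k =
        -((1/((k:ℝ)+2)) • (u k - u 0)) - η k • (Gγ (x k) + (Gγ (y k) - Gγ (x k))) := by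
      rw [hu k]; module
    have h3 : γ * ‖(Gγ (y k) - Gγ (x k)) + (Gγ (x (k+1)) - Gγ (y k))‖ ^ 2 ≤
        ⟪(Gγ (y k) - Gγ (x k)) + (Gγ (x (k+1)) - Gγ (y k)),
          -((1/((k:ℝ)+2)) • (u k - u 0)) - η k • (Gγ (x k) + (Gγ (y k) - Gγ (x k)))⟫_ℝ := by
      have hc := coco (u (k+1)) (u k)
      rw [← hx k, ← hxk k, huu] at hc
      rw [show (Gγ (y k) - Gγ (x k)) + (Gγ (x (k+1)) - Gγ (y k)) = Gγ (x (k+1)) - Gγ (x k) by abel]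
      exact hc
    have h5 : γ ^ 2 * ‖Gγ (x (k+1)) - Gγ (y k)‖ ^ 2 ≤
        (η k) ^ 2 * ‖Gγ (y k) - Gγ (x k)‖ ^ 2 := by
      have hc := lip2 (u (k+1)) (v k)
      rw [← hx k, ← hy k, huv] at hc
      rw [norm_neg, norm_smul, Real.norm_eq_abs, abs_of_pos (hpos k), mul_pow] at hc
      exact hc
    have hreck : η (k+1) = η k * (1 / (((k:ℝ)+2) + 1)) * (1 - M * η k ^ 2 - (1/((k:ℝ)+2)) ^ 2) /
        ((1 - 1/((k:ℝ)+2)) * (1/((k:ℝ)+2)) * (1 - M * η k ^ 2)) := by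
      rw [hrec k]; ring_nf
    have main := aeg_step γ (η k) (η (k+1)) M ((k:ℝ)+2) hγ (hpos k)
      (by linarith) hMpos (hmk k) hMγ hreck
      (Gγ (x k)) (Gγ (y k) - Gγ (x k)) (Gγ (x (k+1)) - Gγ (y k)) (u k - u 0)
      h1 h3 h5
    have hgde : Gγ (x k) + (Gγ (y k) - Gγ (x k)) + (Gγ (x (k+1)) - Gγ (y k)) = Gγ (x (k+1)) := by
      abel
    have hq1 : (1 - 1/((k:ℝ)+2)) • (u k - u 0) -
        η k • (Gγ (x k) + (Gγ (y k) - Gγ (x k))) = u (k+1) - u 0 := by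
      rw [hu k]; module
    rw [hgde, hq1,
      show (Gγ (y k) - Gγ (x k)) + (Gγ (x (k+1)) - Gγ (y k)) = Gγ (x (k+1)) - Gγ (x k) by abel]
        at main
    calc η (k+1) * (((k:ℝ)+2) * ((k:ℝ)+3) / 2) * ‖Gγ (x (k+1))‖ ^ 2
          + ((k:ℝ)+2) * ⟪Gγ (x (k+1)), u (k+1) - u 0⟫_ℝ
          + γ * (((k:ℝ)+1) * ((k:ℝ)+2)) * ‖Gγ (x (k+1)) - Gγ (x k)‖ ^ 2
        = η (k+1) * (((k:ℝ)+2) * (((k:ℝ)+2) + 1) / 2) * ‖Gγ (x (k+1))‖ ^ 2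
          + ((k:ℝ)+2) * ⟪Gγ (x (k+1)), u (k+1) - u 0⟫_ℝ
          + γ * ((((k:ℝ)+2) - 1) * ((k:ℝ)+2)) * ‖Gγ (x (k+1)) - Gγ (x k)‖ ^ 2 := by ring
      _ ≤ η k * ((((k:ℝ)+2) - 1) * ((k:ℝ)+2) / 2) * ‖Gγ (x k)‖ ^ 2
          + (((k:ℝ)+2) - 1) * ⟪Gγ (x k), u k - u 0⟫_ℝ := main
      _ = η k * (((k:ℝ)+1) * ((k:ℝ)+2) / 2) * ‖Gγ (x k)‖ ^ 2
          + ((k:ℝ)+1) * ⟪Gγ (x k), u k - u 0⟫_ℝ := by ring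
  -- telescoping
  have tele : ∀ k : ℕ,
      η k * (((k:ℝ)+1) * ((k:ℝ)+2) / 2) * ‖Gγ (x k)‖ ^ 2
        + ((k:ℝ)+1) * ⟪Gγ (x k), u k - u 0⟫_ℝ
        + γ * ∑ i ∈ Finset.range k,
            ((i:ℝ)+1) * ((i:ℝ)+2) * ‖Gγ (x (i+1)) - Gγ (x i)‖ ^ 2
      ≤ η 0 * ‖Gγ (x 0)‖ ^ 2 := by
    intro k
    induction k with
    | zero =>
        have hz : ⟪Gγ (x 0), u 0 - u 0⟫_ℝ = 0 := by rw [sub_self, inner_zero_right]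
        rw [Finset.range_zero, Finset.sum_empty, hz]
        push_cast
        ring_nf
        nlinarith [sq_nonneg ‖Gγ (x 0)‖, hpos 0]
    | succ n ih =>
        rw [Finset.sum_range_succ]
        have hd := descent n
        push_cast
        push_cast at ih
        nlinarith [hd, ih]
  -- distance bounds
  have hF0b : γ ^ 2 * ‖Gγ (x 0)‖ ^ 2 ≤ ‖u 0 - ustar‖ ^ 2 := by
    have h := lips (u 0); rw [← hx0] at h; exact h
  have hDD : ‖u 0 - ustar‖ ^ 2 ≤ M * γ ^ 2 * ‖x 0 - xstar‖ ^ 2 := by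
    have he : u 0 - ustar = (x 0 - xstar) + γ • (B (x 0) - B xstar) := by
      rw [hu0, hustar, smul_sub]; abel
    have hsn : ‖γ • (B (x 0) - B xstar)‖ = γ * ‖B (x 0) - B xstar‖ := by
      rw [norm_smul, Real.norm_eq_abs, abs_of_pos hγ]
    have hn : ‖u 0 - ustar‖ ≤ ‖x 0 - xstar‖ + γ * (L * ‖x 0 - xstar‖) := by
      rw [he]
      refine le_trans (norm_add_le _ _) ?_
      rw [hsn]
      have := hBLip (x 0) xstar
      have := mul_le_mul_of_nonneg_left (hBLip (x 0) xstar) hγ.le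
      linarith
    have hsq : ‖u 0 - ustar‖ ^ 2 ≤ (‖x 0 - xstar‖ + γ * (L * ‖x 0 - xstar‖)) ^ 2 :=
      pow_le_pow_left₀ (norm_nonneg _) hn 2
    nlinarith [hsq, hMγ2, sq_nonneg ‖x 0 - xstar‖]
  have hF0c : ‖Gγ (x 0)‖ ^ 2 ≤ M * ‖x 0 - xstar‖ ^ 2 := by
    have h := hF0b.trans hDD
    have hg2 : (0:ℝ) < γ ^ 2 := by positivity
    have := le_of_mul_le_mul_left (by linarith [h] : γ ^ 2 * ‖Gγ (x 0)‖ ^ 2 ≤ γ ^ 2 * (M * ‖x 0 - xstar‖ ^ 2)) hg2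
    exact this
  -- lower bound on potential
  have hlowk : ∀ k : ℕ,
      η k * (((k:ℝ)+1) * ((k:ℝ)+2) / 2) * ‖Gγ (x k)‖ ^ 2
        - ((k:ℝ)+1) * (‖u 0 - ustar‖ * ‖Gγ (x k)‖)
      ≤ η k * (((k:ℝ)+1) * ((k:ℝ)+2) / 2) * ‖Gγ (x k)‖ ^ 2
        + ((k:ℝ)+1) * ⟪Gγ (x k), u k - u 0⟫_ℝ := by
    intro k
    have hkc : (0:ℝ) ≤ (k:ℝ) := Nat.cast_nonneg k
    have hsplit : ⟪Gγ (x k), u k - u 0⟫_ℝ =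
        ⟪Gγ (x k), u k - ustar⟫_ℝ + ⟪Gγ (x k), ustar - u 0⟫_ℝ := by
      rw [← inner_add_right]
      congr 1
      abel
    have hc1 : γ * ‖Gγ (x k)‖ ^ 2 ≤ ⟪Gγ (x k), u k - ustar⟫_ℝ := by
      have h := cocos (u k); rw [← hxk k] at h; exact h
    have hc2 : -(‖Gγ (x k)‖ * ‖u 0 - ustar‖) ≤ ⟪Gγ (x k), ustar - u 0⟫_ℝ := by
      have h := abs_real_inner_le_norm (Gγ (x k)) (ustar - u 0)
      rw [norm_sub_rev] at h
      have := neg_abs_le ⟪Gγ (x k), ustar - u 0⟫_ℝ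
      linarith
    have hinner : -(‖Gγ (x k)‖ * ‖u 0 - ustar‖) ≤ ⟪Gγ (x k), u k - u 0⟫_ℝ := by
      rw [hsplit]
      nlinarith [sq_nonneg ‖Gγ (x k)‖]
    have hcoef : (0:ℝ) ≤ (k:ℝ)+1 := by linarith
    nlinarith [mul_le_mul_of_nonneg_left hinner hcoef]
  -- sum nonnegativity
  have hsumnn : ∀ k : ℕ, (0:ℝ) ≤ ∑ i ∈ Finset.range k,
      ((i:ℝ)+1) * ((i:ℝ)+2) * ‖Gγ (x (i+1)) - Gγ (x i)‖ ^ 2 := by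
    intro k
    refine Finset.sum_nonneg fun i _ => ?_
    positivity
  refine ⟨ηs, hηs_pos, htend, ?_, ?_⟩
  · -- first conclusion
    intro k
    have hkc : (0:ℝ) ≤ (k:ℝ) := Nat.cast_nonneg k
    set r := ‖Gγ (x k)‖ with hr
    set D2 := ‖u 0 - ustar‖ with hD2
    set Dx := ‖x 0 - xstar‖ with hDx
    have hrnn : 0 ≤ r := norm_nonneg _
    have hD2nn : 0 ≤ D2 := norm_nonneg _
    have hDxnn : 0 ≤ Dx := norm_nonneg _
    have hPk : η k * (((k:ℝ)+1) * ((k:ℝ)+2) / 2) * r ^ 2 - ((k:ℝ)+1) * (D2 * r)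
        ≤ η 0 * (M * Dx ^ 2) := by
      have h1 := hlowk k
      have h2 := tele k
      have h3 := hsumnn k
      have h4 := mul_le_mul_of_nonneg_left hF0c (hpos 0).le
      linarith [h1, h2, h4, mul_nonneg hγ.le h3]
    have hq : η k * (((k:ℝ)+1) * ((k:ℝ)+2) / 2) * r ^ 2 ≤
        η 0 * (M * Dx ^ 2) + ((k:ℝ)+1) * (D2 * r) := by linarith
    have hAApos : 0 < η k * (((k:ℝ)+1) * ((k:ℝ)+2)) := by
      have := hpos k; positivity
    have hq4 : (η k * (((k:ℝ)+1) * ((k:ℝ)+2))) ^ 2 * r ^ 2 ≤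
        4 * (η k * (((k:ℝ)+1) * ((k:ℝ)+2))) * (η 0 * (M * Dx ^ 2)) +
        4 * ((k:ℝ)+1) ^ 2 * D2 ^ 2 := by
      have m1 := mul_le_mul_of_nonneg_left hq hAApos.le
      have m2 := sq_nonneg (η k * (((k:ℝ)+1) * ((k:ℝ)+2)) * r - 2 * (((k:ℝ)+1) * D2))
      linarith [m1, m2]
    have hZ : ηs ^ 2 * (((k:ℝ)+1) * ((k:ℝ)+2)) * r ^ 2 ≤
        4 * ηs * (η 0 * (M * Dx ^ 2)) + 4 * D2 ^ 2 := by
      have e1 : ηs ^ 2 ≤ η k ^ 2 := by nlinarith [hηs_le k, hηs_pos]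
      have e2 : ((k:ℝ)+1) ^ 2 ≤ ((k:ℝ)+1) * ((k:ℝ)+2) := by nlinarith
      have t1 : ηs ^ 2 * η k ≤ η k ^ 2 * ηs := by
        have := mul_le_mul_of_nonneg_left (hηs_le k) (mul_nonneg hηs_pos.le (hpos k).le)
        nlinarith [this]
      have t2 : ηs ^ 2 * ((k:ℝ)+1) ^ 2 ≤ η k ^ 2 * (((k:ℝ)+1) * ((k:ℝ)+2)) :=
        mul_le_mul e1 e2 (by positivity) (by positivity)
      have m3 := mul_le_mul_of_nonneg_left hq4 (sq_nonneg ηs)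
      have hfac : 0 < η k ^ 2 * (((k:ℝ)+1) * ((k:ℝ)+2)) := by
        have := hpos k; positivity
      refine le_of_mul_le_mul_left ?_ hfac
      have c1 := mul_le_mul_of_nonneg_right t1 (show (0:ℝ) ≤ 4 * (((k:ℝ)+1) * ((k:ℝ)+2)) * (η 0 * (M * Dx ^ 2)) by positivity)
      have c2 := mul_le_mul_of_nonneg_right t2 (show (0:ℝ) ≤ 4 * D2 ^ 2 by positivity)
      linarith [m3, c1, c2]
    have hpos3 : 0 < ηs * ((k:ℝ)+1) * ((k:ℝ)+2) := by positivity
    rw [le_div_iff₀ hpos3]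
    have e : 4 * (M * (η 0 * ηs + γ ^ 2) / ηs) * Dx ^ 2 =
        (4 * M * (η 0 * ηs + γ ^ 2) * Dx ^ 2) / ηs := by ring
    rw [e, le_div_iff₀ hηs_pos]
    linarith [hZ, hDD]
  · -- second conclusion
    intro k
    have hkc : (0:ℝ) ≤ (k:ℝ) := Nat.cast_nonneg k
    set r := ‖Gγ (x k)‖ with hr
    set D2 := ‖u 0 - ustar‖ with hD2
    set Dx := ‖x 0 - xstar‖ with hDx
    have hrnn : 0 ≤ r := norm_nonneg _
    have hD2nn : 0 ≤ D2 := norm_nonneg _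
    have hDxnn : 0 ≤ Dx := norm_nonneg _
    set S := ∑ i ∈ Finset.range k,
        ((i:ℝ)+1) * ((i:ℝ)+2) * ‖Gγ (x (i+1)) - Gγ (x i)‖ ^ 2 with hS
    have hbnd : γ * S ≤ η 0 * (M * Dx ^ 2) +
        (((k:ℝ)+1) * (D2 * r) - η k * (((k:ℝ)+1) * ((k:ℝ)+2) / 2) * r ^ 2) := by
      have h1 := hlowk k
      have h2 := tele k
      have h4 := mul_le_mul_of_nonneg_left hF0c (hpos 0).le
      linarith [h1, h2, h4]
    have h2ηs : (0:ℝ) < 2 * ηs := by positivity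
    have hApos : (0:ℝ) < η k * (((k:ℝ)+1) * ((k:ℝ)+2) / 2) := by
      have := hpos k; positivity
    have hUb : ((k:ℝ)+1) * (D2 * r) - η k * (((k:ℝ)+1) * ((k:ℝ)+2) / 2) * r ^ 2 ≤
        D2 ^ 2 / (2 * ηs) := by
      rw [le_div_iff₀ h2ηs]
      have hX : (((k:ℝ)+1) * (D2 * r) - η k * (((k:ℝ)+1) * ((k:ℝ)+2) / 2) * r ^ 2) *
          (4 * (η k * (((k:ℝ)+1) * ((k:ℝ)+2) / 2))) ≤ ((k:ℝ)+1) ^ 2 * D2 ^ 2 := by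
        nlinarith [sq_nonneg (2 * (η k * (((k:ℝ)+1) * ((k:ℝ)+2) / 2)) * r - ((k:ℝ)+1) * D2)]
      have hY : ((k:ℝ)+1) ^ 2 * (2 * ηs) ≤ 4 * (η k * (((k:ℝ)+1) * ((k:ℝ)+2) / 2)) := by
        have h1 := hηs_le k
        nlinarith [hηs_pos, hpos k]
      have hstep : ((((k:ℝ)+1) * (D2 * r) - η k * (((k:ℝ)+1) * ((k:ℝ)+2) / 2) * r ^ 2) * (2 * ηs)) *
          (4 * (η k * (((k:ℝ)+1) * ((k:ℝ)+2) / 2))) ≤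
          D2 ^ 2 * (4 * (η k * (((k:ℝ)+1) * ((k:ℝ)+2) / 2))) := by
        have m1 := mul_le_mul_of_nonneg_right hX h2ηs.le
        have m2 := mul_le_mul_of_nonneg_right hY (sq_nonneg D2)
        linarith [m1, m2]
      exact le_of_mul_le_mul_right hstep (by positivity)
    rw [le_div_iff₀ hγ]
    have e : (M * (η 0 * ηs + γ ^ 2) / ηs) * Dx ^ 2 =
        M * η 0 * Dx ^ 2 + (M * γ ^ 2 * Dx ^ 2) / ηs := by
      field_simp
    rw [e]
    have hD2b : D2 ^ 2 / (2 * ηs) ≤ (M * γ ^ 2 * Dx ^ 2) / ηs := by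
      rw [div_le_div_iff₀ (by positivity) hηs_pos]
      nlinarith [hDD, hηs_pos]
    have hcomm : S * γ = γ * S := by ring
    rw [hcomm]
    linarith [hbnd, hUb, hD2b]
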